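/- For every x₀ ∈ ℝⁿ and every v ∈ ℝⁿ with ‖v‖ = 1, there exists an integer i with 0 ≤ i ≤ 1176 such that the residue of ⌊‖x₀ + i·v‖²⌋ modulo 29 lies in {0, 4, 8, 12}. (The coloring of ℝⁿ in which a point x is blue exactly when ⌊‖x‖²⌋ mod 29 ∉ {0, 4, 8, 12} contains no blue 1-progression of length 1177.) -/

import Mathlib

namespace Stmt11


abbrev S : Set (ZMod 29) := {0, 4, 8, 12}

set_option maxHeartbeats 1000000 in
lemma factQ : ∀ b c : ZMod 29, ∃ x : ZMod 29,
    x^2 + b*x + c ∈ ({0,4,8,12} : Finset (ZMod 29)) := by decide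

lemma finset_to_set {z : ZMod 29} (h : z ∈ ({0,4,8,12} : Finset (ZMod 29))) : z ∈ S := by
  simp only [Finset.mem_insert, Finset.mem_singleton] at h
  simpa [S, Set.mem_insert_iff] using h

lemma factQ2 (a b c : ZMod 29)
    (ha : (∃ s : ZMod 29, s ≠ 0 ∧ s^2 = a) ∨ (a = 0 ∧ b ≠ 0)) :
    ∃ x : ZMod 29, a*x^2 + b*x + c ∈ S := by
  haveI : Fact (Nat.Prime 29) := ⟨by norm_num⟩
  rcases ha with ⟨s, hs, rfl⟩ | ⟨rfl, hb⟩
  · obtain ⟨y, hy⟩ := factQ (b * s⁻¹) c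
    refine ⟨s⁻¹ * y, ?_⟩
    have h1 : s^2 * (s⁻¹*y)^2 + b*(s⁻¹*y) + c = y^2 + (b*s⁻¹)*y + c := by
      field_simp
    rw [h1]
    exact finset_to_set hy
  · refine ⟨-c * b⁻¹, ?_⟩
    have h1 : (0:ZMod 29)*(-c * b⁻¹)^2 + b*(-c * b⁻¹) + c = 0 := by
      field_simp
      ring
    rw [h1]
    left; rfl

def Goal (B : ℤ) (A θ : ℝ) : Prop :=
  ∃ i : ℕ, i ≤ 1176 ∧
    ((((i:ℤ)^2 + B*(i:ℤ) + ⌊A + θ*(i:ℝ)⌋ : ℤ) : ZMod 29) ∈ S)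

lemma run (B : ℤ) (A θ : ℝ) (t i₀ : ℕ) (h : ℤ)
    (hb : i₀ + 28*t ≤ 1176)
    (hinv : ((t : ZMod 29) ≠ 0) ∨ ((h : ZMod 29) ≠ 0))
    (hrun : ∀ m : ℕ, m ≤ 28 →
      ⌊A + θ*((i₀ + t*m : ℕ) : ℝ)⌋ = ⌊A + θ*(i₀:ℝ)⌋ + h*m) :
    Goal B A θ := by
  haveI : Fact (Nat.Prime 29) := ⟨by norm_num⟩
  obtain ⟨x, hx⟩ := factQ2 ((t:ZMod 29)^2)
      (2*(i₀:ZMod 29)*(t:ZMod 29) + (B:ZMod 29)*(t:ZMod 29) + ((h:ℤ) : ZMod 29))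
      ((i₀:ZMod 29)^2 + (B:ZMod 29)*(i₀:ZMod 29) + ((⌊A + θ*(i₀:ℝ)⌋ : ℤ) : ZMod 29))
      (by
        by_cases ht : (t : ZMod 29) = 0
        · right
          refine ⟨by rw [ht]; ring, ?_⟩
          rw [ht]
          simpa using hinv.resolve_left (by simp [ht])
        · exact Or.inl ⟨t, ht, rfl⟩)
  have hxv : x.val ≤ 28 := by have := ZMod.val_lt x; omega
  refine ⟨i₀ + t * x.val, ?_, ?_⟩
  · have h1 : t * x.val ≤ t * 28 := Nat.mul_le_mul_left t hxv
    have h2 : t*28 = 28*t := by ring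
    omega
  · rw [hrun x.val hxv]
    have key : ((((i₀ + t*x.val : ℕ):ℤ)^2 + B*((i₀ + t*x.val : ℕ):ℤ)
        + (⌊A + θ*(i₀:ℝ)⌋ + h*(x.val:ℤ)) : ℤ) : ZMod 29)
        = (t:ZMod 29)^2 * x^2
          + (2*(i₀:ZMod 29)*(t:ZMod 29) + (B:ZMod 29)*(t:ZMod 29) + ((h:ℤ):ZMod 29)) * x
          + ((i₀:ZMod 29)^2 + (B:ZMod 29)*(i₀:ZMod 29) + ((⌊A + θ*(i₀:ℝ)⌋ : ℤ):ZMod 29)) := by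
      push_cast
      rw [ZMod.natCast_val, ZMod.cast_id]
      ring
    rw [show ((i₀ + t * x.val : ℕ):ℤ)^2 + B*((i₀ + t*x.val : ℕ):ℤ)
        + (⌊A + θ*(i₀:ℝ)⌋ + h*(x.val:ℤ))
        = (((i₀ + t*x.val : ℕ):ℤ)^2 + B*((i₀ + t*x.val : ℕ):ℤ)
        + (⌊A + θ*(i₀:ℝ)⌋ + h*(x.val:ℤ)) : ℤ) from rfl]
    rw [key]
    exact hx



-- good criteria
lemma good_of_fract_lt {z η : ℝ} (hη : 0 ≤ η) (h : Int.fract z < 1 - 28*η) :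
    ⌊z + 28*η⌋ = ⌊z⌋ := by
  have h1 : (⌊z⌋:ℤ) ≤ ⌊z + 28*η⌋ := Int.floor_mono (by linarith)
  have hfr : Int.fract z = z - ⌊z⌋ := rfl
  have h2 : ⌊z + 28*η⌋ < ⌊z⌋ + 1 := by
    rw [Int.floor_lt]
    push_cast
    nlinarith
  omega

lemma good_of_le_fract {z η : ℝ} (hη : η ≤ 0) (h : 28*(-η) ≤ Int.fract z) :
    ⌊z + 28*η⌋ = ⌊z⌋ := by
  have h1 : ⌊z + 28*η⌋ ≤ ⌊z⌋ := Int.floor_mono (by linarith)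
  have hfr : Int.fract z = z - ⌊z⌋ := rfl
  have h2 : (⌊z⌋:ℤ) ≤ ⌊z + 28*η⌋ := by
    apply Int.le_floor.mpr
    push_cast
    linarith
  omega

lemma slide_pos (z η : ℝ) (k : ℕ) (hη : 0 < η) (hη1 : η < 1)
    (hk : 1 - k*η ≤ Int.fract z) :
    ∃ q : ℕ, 1 ≤ q ∧ q ≤ k ∧ Int.fract (z + q*η) < η := by
  classical
  have hex : ∃ q : ℕ, 1 ≤ Int.fract z + q*η := ⟨k, by linarith⟩
  set q := Nat.find hex with hqdef
  have hq : 1 ≤ Int.fract z + q*η := Nat.find_spec hex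
  have hqk : q ≤ k := Nat.find_min' hex (by linarith)
  have hq1 : 1 ≤ q := by
    rcases Nat.eq_zero_or_pos q with h0 | h
    · exfalso
      rw [h0] at hq
      simp at hq
      have := Int.fract_lt_one z
      linarith
    · exact h
  have hprev : Int.fract z + ((q-1:ℕ):ℝ)*η < 1 := by
    have := Nat.find_min hex (show q-1 < q by omega)
    push_neg at this
    linarith [this]
  have hcast : ((q:ℝ)) = ((q-1:ℕ):ℝ) + 1 := by
    push_cast [Nat.cast_sub hq1]
    ring
  have hub : Int.fract z + q*η < 1 + η := by
    rw [hcast]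
    linarith
  have hfr : Int.fract (z + q*η) = Int.fract z + q*η - 1 := by
    have h1 : Int.fract (z + q*η) = Int.fract (Int.fract z + q*η) := by
      conv_lhs => rw [← Int.floor_add_fract z, add_assoc, Int.fract_intCast_add]
    have h2 : Int.fract (Int.fract z + (q:ℝ)*η) = Int.fract (Int.fract z + (q:ℝ)*η - 1) := by
      rw [show (Int.fract z + (q:ℝ)*η - 1) = (Int.fract z + (q:ℝ)*η) - ((1:ℤ):ℝ) by norm_num,
        Int.fract_sub_intCast]
    rw [h1, h2]
    exact Int.fract_eq_self.mpr ⟨by linarith, by linarith⟩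
  exact ⟨q, hq1, hqk, by linarith⟩

lemma slide_neg (z η : ℝ) (k : ℕ) (hη : η < 0) (hη1 : -1 < η)
    (hk : Int.fract z < k*(-η)) :
    ∃ q : ℕ, 1 ≤ q ∧ q ≤ k ∧ 1 + η ≤ Int.fract (z + q*η) := by
  classical
  have hex : ∃ q : ℕ, Int.fract z + q*η < 0 := ⟨k, by linarith⟩
  set q := Nat.find hex with hqdef
  have hq : Int.fract z + q*η < 0 := Nat.find_spec hex
  have hqk : q ≤ k := Nat.find_min' hex (by linarith)
  have hq1 : 1 ≤ q := by
    rcases Nat.eq_zero_or_pos q with h0 | h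
    · exfalso
      rw [h0] at hq
      simp at hq
      have := Int.fract_nonneg z
      linarith
    · exact h
  have hprev : 0 ≤ Int.fract z + ((q-1:ℕ):ℝ)*η := by
    have := Nat.find_min hex (show q-1 < q by omega)
    push_neg at this
    linarith [this]
  have hcast : ((q:ℝ)) = ((q-1:ℕ):ℝ) + 1 := by
    push_cast [Nat.cast_sub hq1]
    ring
  have hlb : η ≤ Int.fract z + q*η := by
    rw [hcast]
    linarith
  have hfr : Int.fract (z + q*η) = Int.fract z + q*η + 1 := by
    have h1 : Int.fract (z + q*η) = Int.fract (Int.fract z + q*η) := by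
      conv_lhs => rw [← Int.floor_add_fract z, add_assoc, Int.fract_intCast_add]
    have h2 : Int.fract (Int.fract z + (q:ℝ)*η) = Int.fract (Int.fract z + (q:ℝ)*η + 1) := by
      rw [show (Int.fract z + (q:ℝ)*η + 1) = (Int.fract z + (q:ℝ)*η) + ((1:ℤ):ℝ) by norm_num,
        Int.fract_add_intCast]
    rw [h1, h2]
    exact Int.fract_eq_self.mpr ⟨by linarith, by linarith⟩
  exact ⟨q, hq1, hqk, by linarith⟩

lemma pigeon (A θ : ℝ) (K : ℕ) (hK : 1 ≤ K) (c lam : ℝ) (hlam : 0 < lam)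
    (hall : ∀ p : ℕ, p ≤ K →
      c ≤ Int.fract (A + θ*p) ∧ Int.fract (A + θ*p) < c + lam) :
    ∃ d : ℕ, 1 ≤ d ∧ d ≤ K ∧ ∃ g : ℤ, |θ*d - g| < lam/K := by
  have hK0 : (0:ℝ) < K := by exact_mod_cast hK
  set u : ℕ → ℝ := fun p => (Int.fract (A + θ*p) - c) * K / lam with hu
  have hub : ∀ p : ℕ, p ≤ K → 0 ≤ u p ∧ u p < K := by
    intro p hp
    obtain ⟨h1, h2⟩ := hall p hp
    constructor
    · apply div_nonneg _ (le_of_lt hlam)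
      nlinarith
    · rw [div_lt_iff₀ hlam]
      nlinarith
  set f : Fin (K+1) → Fin K := fun p =>
    ⟨(⌊u p⌋).toNat, by
      obtain ⟨h1, h2⟩ := hub p (by omega)
      have h3 : ⌊u p⌋ < (K:ℤ) := Int.floor_lt.mpr (by exact_mod_cast h2)
      have h4 : 0 ≤ ⌊u p⌋ := Int.floor_nonneg.mpr h1
      omega⟩ with hf
  obtain ⟨p, q, hpq, hfeq⟩ := Fintype.exists_ne_map_eq_of_card_lt f (by simp)
  have hfl : ⌊u p.val⌋ = ⌊u q.val⌋ := by
    have e1 := congrArg Fin.val hfeq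
    simp only [hf] at e1
    have h4 : 0 ≤ ⌊u p.val⌋ := Int.floor_nonneg.mpr (hub p (by omega)).1
    have h5 : 0 ≤ ⌊u q.val⌋ := Int.floor_nonneg.mpr (hub q (by omega)).1
    omega
  have habs : |u p.val - u q.val| < 1 := by
    rw [abs_lt]
    have hflr : ((⌊u p.val⌋:ℝ)) = ((⌊u q.val⌋:ℝ)) := by exact_mod_cast hfl
    constructor
    · linarith [Int.floor_le (u p.val), Int.lt_floor_add_one (u q.val)]
    · linarith [Int.floor_le (u q.val), Int.lt_floor_add_one (u p.val)]
  -- convert to fract difference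
  have hfd : |Int.fract (A + θ*p.val) - Int.fract (A + θ*q.val)| < lam/K := by
    have he : Int.fract (A + θ*p.val) - Int.fract (A + θ*q.val)
        = (u p.val - u q.val) * (lam/K) := by
      field_simp [hu]
      simp only [hu]
      rw [sub_mul _ _ lam, div_mul_cancel₀ _ hlam.ne', div_mul_cancel₀ _ hlam.ne']
      ring
    rw [he, abs_mul, abs_of_pos (by positivity : (0:ℝ) < lam/K)]
    calc |u p.val - u q.val| * (lam/K) < 1 * (lam/K) := by
          apply mul_lt_mul_of_pos_right habs (by positivity)
      _ = lam/K := one_mul _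
  -- wlog
  have main : ∀ pp qq : ℕ, pp ≤ K → qq ≤ K → qq < pp →
      |Int.fract (A + θ*pp) - Int.fract (A + θ*qq)| < lam/K →
      ∃ d : ℕ, 1 ≤ d ∧ d ≤ K ∧ ∃ g : ℤ, |θ*d - g| < lam/K := by
    intro pp qq hpp hqq hlt hh
    refine ⟨pp - qq, by omega, by omega, ⌊A + θ*pp⌋ - ⌊A + θ*qq⌋, ?_⟩
    have he2 : θ*((pp-qq:ℕ):ℝ) - ((⌊A + θ*pp⌋ - ⌊A + θ*qq⌋ : ℤ):ℝ)
        = Int.fract (A + θ*pp) - Int.fract (A + θ*qq) := by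
      rw [Nat.cast_sub (le_of_lt hlt)]
      unfold Int.fract
      push_cast
      ring
    rw [he2]
    exact hh
  have hne : p.val ≠ q.val := fun hc => hpq (Fin.ext hc)
  rcases Nat.lt_or_ge p.val q.val with hlt | hge
  · exact main q.val p.val (by omega) (by omega) hlt (by rwa [abs_sub_comm])
  · exact main p.val q.val (by omega) (by omega) (by omega) hfd



lemma bin_lt (x : ℝ) : (⌊41 * Int.fract x⌋).toNat < 41 := by
  have h1 : Int.fract x < 1 := Int.fract_lt_one x
  have h2 : 0 ≤ Int.fract x := Int.fract_nonneg x
  have h3 : ⌊41 * Int.fract x⌋ < (41:ℤ) := Int.floor_lt.mpr (by push_cast; linarith)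
  have h4 : 0 ≤ ⌊41 * Int.fract x⌋ := Int.floor_nonneg.mpr (by linarith)
  omega

lemma dirichlet (θ : ℝ) : ∃ t : ℕ, 1 ≤ t ∧ t ≤ 40 ∧ ∃ g : ℤ, |θ*t - g| ≤ 1/41 := by
  set f : Fin 41 → Fin 41 :=
    fun j => ⟨(⌊41 * Int.fract (θ*(j.val:ℝ))⌋).toNat, bin_lt _⟩ with hf
  have main : ∀ pp qq : ℕ, pp ≤ 40 → qq < pp →
      (⌊41 * Int.fract (θ*(pp:ℝ))⌋ = ⌊41 * Int.fract (θ*(qq:ℝ))⌋) →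
      ∃ t : ℕ, 1 ≤ t ∧ t ≤ 40 ∧ ∃ g : ℤ, |θ*t - g| ≤ 1/41 := by
    intro pp qq hpp hlt hfl
    refine ⟨pp - qq, by omega, by omega, ⌊θ*(pp:ℝ)⌋ - ⌊θ*(qq:ℝ)⌋, ?_⟩
    have hflr : ((⌊41 * Int.fract (θ*(pp:ℝ))⌋:ℝ)) = ((⌊41 * Int.fract (θ*(qq:ℝ))⌋:ℝ)) := by
      exact_mod_cast hfl
    have h1 : |Int.fract (θ*(pp:ℝ)) - Int.fract (θ*(qq:ℝ))| ≤ 1/41 := by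
      rw [abs_le]
      constructor
      · nlinarith [Int.floor_le (41 * Int.fract (θ*(pp:ℝ))),
          Int.lt_floor_add_one (41 * Int.fract (θ*(qq:ℝ)))]
      · nlinarith [Int.floor_le (41 * Int.fract (θ*(qq:ℝ))),
          Int.lt_floor_add_one (41 * Int.fract (θ*(pp:ℝ)))]
    have he : θ*((pp-qq:ℕ):ℝ) - ((⌊θ*(pp:ℝ)⌋ - ⌊θ*(qq:ℝ)⌋ : ℤ):ℝ)
        = Int.fract (θ*(pp:ℝ)) - Int.fract (θ*(qq:ℝ)) := by
      rw [Nat.cast_sub (le_of_lt hlt)]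
      unfold Int.fract
      push_cast
      ring
    rw [he]
    exact h1
  by_cases hinj : Function.Injective f
  · have hsurj : Function.Surjective f := Finite.surjective_of_injective hinj
    obtain ⟨j, hj⟩ := hsurj ⟨40, by norm_num⟩
    have hval : (⌊41 * Int.fract (θ*(j.val:ℝ))⌋).toNat = 40 := congrArg Fin.val hj
    have hfl40 : ⌊41 * Int.fract (θ*(j.val:ℝ))⌋ = 40 := by omega
    have h40 : (40:ℝ) ≤ 41 * Int.fract (θ*(j.val:ℝ)) := by
      have := Int.floor_le (41 * Int.fract (θ*(j.val:ℝ)))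
      rw [hfl40] at this
      exact_mod_cast this
    have hj0 : j.val ≠ 0 := by
      intro h0
      rw [h0] at h40
      simp at h40
      linarith
    refine ⟨j.val, by omega, by have := j.isLt; omega, ⌊θ*(j.val:ℝ)⌋ + 1, ?_⟩
    have hlt1 : Int.fract (θ*(j.val:ℝ)) < 1 := Int.fract_lt_one _
    have hfr : θ*(j.val:ℝ) - ((⌊θ*(j.val:ℝ)⌋ + 1 : ℤ):ℝ) = Int.fract (θ*(j.val:ℝ)) - 1 := by
      unfold Int.fract
      push_cast
      ring
    rw [hfr, abs_le]
    constructor <;> linarith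
  · rw [Function.not_injective_iff] at hinj
    obtain ⟨a, b, hab, hne⟩ := hinj
    have hval : (⌊41 * Int.fract (θ*(a.val:ℝ))⌋).toNat
        = (⌊41 * Int.fract (θ*(b.val:ℝ))⌋).toNat := congrArg Fin.val hab
    have hna : 0 ≤ ⌊41 * Int.fract (θ*(a.val:ℝ))⌋ :=
      Int.floor_nonneg.mpr (by nlinarith [Int.fract_nonneg (θ*(a.val:ℝ))])
    have hnb : 0 ≤ ⌊41 * Int.fract (θ*(b.val:ℝ))⌋ :=
      Int.floor_nonneg.mpr (by nlinarith [Int.fract_nonneg (θ*(b.val:ℝ))])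
    have hfl : ⌊41 * Int.fract (θ*(a.val:ℝ))⌋ = ⌊41 * Int.fract (θ*(b.val:ℝ))⌋ := by omega
    have hvne : a.val ≠ b.val := fun hc => hne (Fin.ext hc)
    rcases Nat.lt_or_ge a.val b.val with hlt | hge
    · exact main b.val a.val (by have := b.isLt; omega) hlt hfl.symm
    · exact main a.val b.val (by have := a.isLt; omega) (by omega) hfl

lemma floorL_mono (A θ : ℝ) (h0 : 0 ≤ θ) : ∀ i j : ℕ, i ≤ j →
    ⌊A + θ*(i:ℝ)⌋ ≤ ⌊A + θ*(j:ℝ)⌋ := by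
  intro i j hij
  apply Int.floor_mono
  have hc : (i:ℝ) ≤ j := by exact_mod_cast hij
  nlinarith

lemma small (B : ℤ) (A θ : ℝ) (h0 : 0 ≤ θ) (h1 : θ < 1/31) : Goal B A θ := by
  have hmono := floorL_mono A θ h0
  have hwin : ∃ w : ℕ, w ≤ 39 ∧
      ⌊A + θ*((29*w+28 : ℕ):ℝ)⌋ = ⌊A + θ*((29*w : ℕ):ℝ)⌋ := by
    by_contra hno
    push_neg at hno
    have hstep : ∀ w : ℕ, w ≤ 39 →
        ⌊A + θ*((29*w:ℕ):ℝ)⌋ + 1 ≤ ⌊A + θ*((29*(w+1):ℕ):ℝ)⌋ := by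
      intro w hw
      have hne := hno w hw
      have h28 := hmono (29*w) (29*w+28) (by omega)
      have h29 := hmono (29*w+28) (29*(w+1)) (by omega)
      omega
    have hind : ∀ w : ℕ, w ≤ 40 → ⌊A + θ*((29*0:ℕ):ℝ)⌋ + w ≤ ⌊A + θ*((29*w:ℕ):ℝ)⌋ := by
      intro w
      induction w with
      | zero => intro _; omega
      | succ k ih =>
        intro hk
        have ih2 := ih (by omega)
        have := hstep k (by omega)
        omega
    have h40 := hind 40 le_rfl
    have e1 : ((29*0:ℕ):ℝ) = 0 := by norm_num
    have e2 : ((29*40:ℕ):ℝ) = 1160 := by norm_num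
    rw [e1, e2] at h40
    have hL0 : A - 1 < ((⌊A + θ*(0:ℝ)⌋:ℤ) : ℝ) := by
      have := Int.lt_floor_add_one (A + θ*(0:ℝ))
      linarith
    have hL1 : ((⌊A + θ*(1160:ℝ)⌋:ℤ) : ℝ) ≤ A + 1160*θ := by
      have := Int.floor_le (A + θ*(1160:ℝ))
      linarith
    have hc : ((⌊A + θ*(0:ℝ)⌋ : ℤ):ℝ) + 40 ≤ ((⌊A + θ*(1160:ℝ)⌋:ℤ):ℝ) := by
      exact_mod_cast h40
    linarith
  obtain ⟨w, hw, hww⟩ := hwin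
  apply run B A θ 1 (29*w) 0 (by omega) (Or.inl (by decide))
  intro m hm
  have ha := hmono (29*w) (29*w+1*m) (by omega)
  have hb := hmono (29*w+1*m) (29*w+28) (by omega)
  omega

lemma large (B : ℤ) (A θ : ℝ) (h0 : 30/31 < θ) (h1 : θ < 1) : Goal B A θ := by
  have hstep1 : ∀ i : ℕ, ⌊A + θ*((i+1:ℕ):ℝ)⌋ - ((i:ℤ)+1) ≤ ⌊A + θ*(i:ℝ)⌋ - i := by
    intro i
    have h2 : ⌊A + θ*((i+1:ℕ):ℝ)⌋ ≤ ⌊(A + θ*(i:ℝ)) + 1⌋ := by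
      apply Int.floor_mono
      push_cast
      nlinarith
    have h3 : ⌊(A + θ*(i:ℝ)) + 1⌋ = ⌊A + θ*(i:ℝ)⌋ + 1 := by
      rw [show (A + θ*(i:ℝ)) + 1 = (A + θ*(i:ℝ)) + ((1:ℤ):ℝ) by norm_num, Int.floor_add_intCast]
    omega
  have hmono : ∀ i j : ℕ, i ≤ j → ⌊A + θ*(j:ℝ)⌋ - (j:ℤ) ≤ ⌊A + θ*(i:ℝ)⌋ - i := by
    intro i j hij
    induction hij with
    | refl => omega
    | @step k hk ih =>
      have h5 := hstep1 k
      have h6 : ((k+1:ℕ):ℝ) = ((k:ℕ):ℝ) + 1 := by push_cast; ring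
      rw [h6] at h5
      have h7 : ⌊A + θ*(((k+1:ℕ)):ℝ)⌋ - ((k+1:ℕ):ℤ) ≤ ⌊A + θ*(k:ℝ)⌋ - (k:ℤ) := by
        push_cast
        push_cast at h5
        omega
      push_cast at h7 ih ⊢
      omega
  have hwin : ∃ w : ℕ, w ≤ 39 ∧
      ⌊A + θ*((29*w+28 : ℕ):ℝ)⌋ - ((29*w+28 : ℕ):ℤ)
        = ⌊A + θ*((29*w : ℕ):ℝ)⌋ - ((29*w : ℕ):ℤ) := by
    by_contra hno
    push_neg at hno
    have hstep : ∀ w : ℕ, w ≤ 39 →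
        (⌊A + θ*((29*(w+1):ℕ):ℝ)⌋ - ((29*(w+1):ℕ):ℤ)) + 1
          ≤ ⌊A + θ*((29*w:ℕ):ℝ)⌋ - ((29*w:ℕ):ℤ) := by
      intro w hw
      have hne := hno w hw
      have h28 := hmono (29*w) (29*w+28) (by omega)
      have h29 := hmono (29*w+28) (29*(w+1)) (by omega)
      push_cast at h28 h29 hne ⊢
      omega
    have hind : ∀ w : ℕ, w ≤ 40 →
        (⌊A + θ*((29*w:ℕ):ℝ)⌋ - ((29*w:ℕ):ℤ)) + w
          ≤ ⌊A + θ*((29*0:ℕ):ℝ)⌋ - ((29*0:ℕ):ℤ) := by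
      intro w
      induction w with
      | zero => intro _; omega
      | succ k ih =>
        intro hk
        have ih2 := ih (by omega)
        have := hstep k (by omega)
        push_cast at ih2 this ⊢
        omega
    have h40 := hind 40 le_rfl
    have e1 : ((29*0:ℕ):ℝ) = 0 := by norm_num
    have e2 : ((29*40:ℕ):ℝ) = 1160 := by norm_num
    rw [e1, e2] at h40
    have h40' : ⌊A + θ*(1160:ℝ)⌋ - 1160 + 40 ≤ ⌊A + θ*(0:ℝ)⌋ := by omega
    have hL0 : ((⌊A + θ*(0:ℝ)⌋:ℤ):ℝ) ≤ A := by
      have := Int.floor_le (A + θ*(0:ℝ))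
      linarith
    have hL1 : A + 1160*θ - 1 < ((⌊A + θ*(1160:ℝ)⌋:ℤ):ℝ) := by
      have := Int.lt_floor_add_one (A + θ*(1160:ℝ))
      linarith
    have hc : ((⌊A + θ*(1160:ℝ)⌋:ℤ):ℝ) - 1160 + 40 ≤ ((⌊A + θ*(0:ℝ)⌋:ℤ):ℝ) := by
      exact_mod_cast h40'
    linarith
  obtain ⟨w, hw, hww⟩ := hwin
  apply run B A θ 1 (29*w) 1 (by omega) (Or.inl (by decide))
  intro m hm
  have ha := hmono (29*w) (29*w+1*m) (by omega)
  have hb := hmono (29*w+1*m) (29*w+28) (by omega)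
  push_cast at ha hb hww ⊢
  omega

set_option maxHeartbeats 1000000 in
lemma middle (B : ℤ) (A θ : ℝ) (hθl : 1/31 ≤ θ) (hθu : θ ≤ 30/31) : Goal B A θ := by
  classical
  have hex : ∃ t : ℕ, 1 ≤ t ∧ t ≤ 40 ∧ ∃ g : ℤ, |θ*t - g| ≤ 1/41 := dirichlet θ
  set t := Nat.find hex with htdef
  obtain ⟨ht1, ht40, h, hh⟩ := Nat.find_spec hex
  set η := θ*t - h with hηdef
  have hmin : ∀ d : ℕ, 1 ≤ d → d < t → ∀ g : ℤ, 1/41 < |θ*d - g| := by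
    intro d hd1 hdt g
    by_contra hc
    push_neg at hc
    exact Nat.find_min hex hdt ⟨hd1, by omega, g, hc⟩
  have hηabs : |η| ≤ 1/41 := hh
  have hη1 : η ≤ 1/41 := (abs_le.mp hηabs).2
  have hη2 : -(1/41) ≤ η := (abs_le.mp hηabs).1
  have hfr_lt : ∀ p : ℕ, Int.fract (A + θ*(p:ℝ)) < 1 := fun p => Int.fract_lt_one _
  have hfr_nn : ∀ p : ℕ, 0 ≤ Int.fract (A + θ*(p:ℝ)) := fun p => Int.fract_nonneg _
  have hshift : ∀ p q : ℕ, Int.fract (A + θ*((p + t*q : ℕ):ℝ))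
      = Int.fract (A + θ*(p:ℝ) + q*η) := by
    intro p q
    have hd : A + θ*((p + t*q : ℕ):ℝ) = (A + θ*(p:ℝ) + q*η) + ((h*q:ℤ):ℝ) := by
      push_cast
      rw [hηdef]
      ring
    rw [hd, Int.fract_add_intCast]
  have escape : ∃ i₀ : ℕ, i₀ + 28*t ≤ 1176 ∧
      ⌊(A + θ*(i₀:ℝ)) + 28*η⌋ = ⌊A + θ*(i₀:ℝ)⌋ := by
    rcases le_or_gt 0 η with hpos | hneg
    · -- η ≥ 0
      rcases eq_or_lt_of_le hpos with hzero | hη0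
      · refine ⟨0, by omega, good_of_fract_lt hpos ?_⟩
        rw [← hzero]
        have := hfr_lt 0
        norm_num at this ⊢
        linarith
      by_cases h16 : t ≤ 16
      · by_cases hgood0 : Int.fract (A + θ*((0:ℕ):ℝ)) < 1 - 28*η
        · exact ⟨0, by omega, good_of_fract_lt hpos hgood0⟩
        · push_neg at hgood0
          obtain ⟨q, hq1, hq28, hqf⟩ := slide_pos (A + θ*((0:ℕ):ℝ)) η 28 hη0 (by linarith)
            (by push_cast; push_cast at hgood0; linarith)
          refine ⟨0 + t*q, ?_, ?_⟩
          · have : t*q ≤ 16*28 := Nat.mul_le_mul h16 hq28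
            omega
          · apply good_of_fract_lt hpos
            rw [hshift 0 q]
            linarith
      · by_cases h28 : t ≤ 28
        · by_cases hA : ∃ p : ℕ, p ≤ t-1 ∧ Int.fract (A + θ*(p:ℝ)) < 1 - 28*η
          · obtain ⟨p, hp, hpf⟩ := hA
            exact ⟨p, by omega, good_of_fract_lt hpos hpf⟩
          · push_neg at hA
            by_cases hB : ∃ p : ℕ, p ≤ t-1 ∧ 1 - 13*η ≤ Int.fract (A + θ*(p:ℝ))
            · obtain ⟨p, hp, hpf⟩ := hB
              obtain ⟨q, hq1, hq13, hqf⟩ := slide_pos (A + θ*(p:ℝ)) η 13 hη0 (by linarith)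
                (by push_cast; linarith)
              refine ⟨p + t*q, ?_, ?_⟩
              · have : t*q ≤ 28*13 := Nat.mul_le_mul h28 hq13
                omega
              · apply good_of_fract_lt hpos
                rw [hshift p q]
                linarith
            · push_neg at hB
              exfalso
              obtain ⟨d, hd1, hdK, g, hg⟩ := pigeon A θ (t-1) (by omega) (1 - 28*η) (15*η)
                (by linarith) (fun p hp => ⟨hA p hp, by have := hB p hp; linarith⟩)
              have hcon := hmin d hd1 (by omega) g
              have hK16 : (16:ℝ) ≤ ((t-1:ℕ):ℝ) := by exact_mod_cast (by omega : 16 ≤ t-1)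
              have hdb : 15*η/((t-1:ℕ):ℝ) ≤ 1/41 := by
                rw [div_le_iff₀ (by linarith)]
                nlinarith
              linarith
        · -- t ≥ 29
          by_cases hA : ∃ p : ℕ, p ≤ t-1 ∧ Int.fract (A + θ*(p:ℝ)) < 1 - 28*η
          · obtain ⟨p, hp, hpf⟩ := hA
            exact ⟨p, by omega, good_of_fract_lt hpos hpf⟩
          · push_neg at hA
            exfalso
            obtain ⟨d, hd1, hdK, g, hg⟩ := pigeon A θ (t-1) (by omega) (1 - 28*η) (28*η)
              (by linarith) (fun p hp => ⟨hA p hp, by have := hfr_lt p; linarith⟩)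
            have hcon := hmin d hd1 (by omega) g
            have hK28 : (28:ℝ) ≤ ((t-1:ℕ):ℝ) := by exact_mod_cast (by omega : 28 ≤ t-1)
            have hdb : 28*η/((t-1:ℕ):ℝ) ≤ 1/41 := by
              rw [div_le_iff₀ (by linarith)]
              nlinarith
            linarith
    · -- η < 0
      by_cases h16 : t ≤ 16
      · by_cases hgood0 : 28*(-η) ≤ Int.fract (A + θ*((0:ℕ):ℝ))
        · exact ⟨0, by omega, good_of_le_fract (le_of_lt hneg) hgood0⟩
        · push_neg at hgood0
          obtain ⟨q, hq1, hq28, hqf⟩ := slide_neg (A + θ*((0:ℕ):ℝ)) η 28 hneg (by linarith)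
            (by push_cast; push_cast at hgood0; linarith)
          refine ⟨0 + t*q, ?_, ?_⟩
          · have : t*q ≤ 16*28 := Nat.mul_le_mul h16 hq28
            omega
          · apply good_of_le_fract (le_of_lt hneg)
            rw [hshift 0 q]
            linarith
      · by_cases h28 : t ≤ 28
        · by_cases hA : ∃ p : ℕ, p ≤ t-1 ∧ 28*(-η) ≤ Int.fract (A + θ*(p:ℝ))
          · obtain ⟨p, hp, hpf⟩ := hA
            exact ⟨p, by omega, good_of_le_fract (le_of_lt hneg) hpf⟩
          · push_neg at hA
            by_cases hB : ∃ p : ℕ, p ≤ t-1 ∧ Int.fract (A + θ*(p:ℝ)) < 13*(-η)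
            · obtain ⟨p, hp, hpf⟩ := hB
              obtain ⟨q, hq1, hq13, hqf⟩ := slide_neg (A + θ*(p:ℝ)) η 13 hneg (by linarith)
                (by push_cast; linarith)
              refine ⟨p + t*q, ?_, ?_⟩
              · have : t*q ≤ 28*13 := Nat.mul_le_mul h28 hq13
                omega
              · apply good_of_le_fract (le_of_lt hneg)
                rw [hshift p q]
                linarith
            · push_neg at hB
              exfalso
              obtain ⟨d, hd1, hdK, g, hg⟩ := pigeon A θ (t-1) (by omega) (13*(-η)) (15*(-η))
                (by linarith) (fun p hp => ⟨hB p hp, by have := hA p hp; linarith⟩)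
              have hcon := hmin d hd1 (by omega) g
              have hK16 : (16:ℝ) ≤ ((t-1:ℕ):ℝ) := by exact_mod_cast (by omega : 16 ≤ t-1)
              have hdb : 15*(-η)/((t-1:ℕ):ℝ) ≤ 1/41 := by
                rw [div_le_iff₀ (by linarith)]
                nlinarith
              linarith
        · by_cases hA : ∃ p : ℕ, p ≤ t-1 ∧ 28*(-η) ≤ Int.fract (A + θ*(p:ℝ))
          · obtain ⟨p, hp, hpf⟩ := hA
            exact ⟨p, by omega, good_of_le_fract (le_of_lt hneg) hpf⟩
          · push_neg at hA
            exfalso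
            obtain ⟨d, hd1, hdK, g, hg⟩ := pigeon A θ (t-1) (by omega) 0 (28*(-η))
              (by linarith) (fun p hp => ⟨hfr_nn p, by have := hA p hp; linarith⟩)
            have hcon := hmin d hd1 (by omega) g
            have hK28 : (28:ℝ) ≤ ((t-1:ℕ):ℝ) := by exact_mod_cast (by omega : 28 ≤ t-1)
            have hdb : 28*(-η)/((t-1:ℕ):ℝ) ≤ 1/41 := by
              rw [div_le_iff₀ (by linarith)]
              nlinarith
            linarith
  obtain ⟨i₀, hbud, hgood⟩ := escape
  have hrun : ∀ m : ℕ, m ≤ 28 →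
      ⌊A + θ*((i₀ + t*m : ℕ):ℝ)⌋ = ⌊A + θ*(i₀:ℝ)⌋ + h*m := by
    intro m hm
    have hdec : A + θ*((i₀ + t*m : ℕ):ℝ) = ((A + θ*(i₀:ℝ)) + m*η) + ((h*m:ℤ):ℝ) := by
      push_cast
      rw [hηdef]
      ring
    rw [hdec, Int.floor_add_intCast]
    have hmr : (m:ℝ) ≤ 28 := by exact_mod_cast hm
    have hmid : ⌊(A + θ*(i₀:ℝ)) + m*η⌋ = ⌊A + θ*(i₀:ℝ)⌋ := by
      rcases le_or_gt 0 η with hp | hn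
      · have l1 : ⌊A + θ*(i₀:ℝ)⌋ ≤ ⌊(A + θ*(i₀:ℝ)) + m*η⌋ :=
          Int.floor_mono (by nlinarith)
        have l2 : ⌊(A + θ*(i₀:ℝ)) + m*η⌋ ≤ ⌊(A + θ*(i₀:ℝ)) + 28*η⌋ :=
          Int.floor_mono (by nlinarith)
        omega
      · have l1 : ⌊(A + θ*(i₀:ℝ)) + m*η⌋ ≤ ⌊A + θ*(i₀:ℝ)⌋ :=
          Int.floor_mono (by nlinarith)
        have l2 : ⌊(A + θ*(i₀:ℝ)) + 28*η⌋ ≤ ⌊(A + θ*(i₀:ℝ)) + m*η⌋ :=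
          Int.floor_mono (by nlinarith)
        omega
    rw [hmid]
  have hinv : ((t:ZMod 29) ≠ 0) ∨ ((h : ZMod 29) ≠ 0) := by
    by_cases ht29 : t = 29
    · right
      have htr : ((t:ℕ):ℝ) = 29 := by rw [ht29]; norm_num
      have c1 := hη1
      have c2 := hη2
      rw [hηdef, htr] at c1 c2
      have hg1 : (1:ℤ) ≤ h := by
        by_contra hcc
        push_neg at hcc
        have hcr : (h:ℝ) ≤ 0 := by exact_mod_cast (by omega : h ≤ 0)
        nlinarith
      have hg2 : h ≤ 28 := by
        by_contra hcc
        push_neg at hcc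
        have hcr : (29:ℝ) ≤ (h:ℝ) := by exact_mod_cast (by omega : (29:ℤ) ≤ h)
        nlinarith
      intro hzero
      rw [ZMod.intCast_zmod_eq_zero_iff_dvd] at hzero
      obtain ⟨k, hk⟩ := hzero
      omega
    · left
      intro hzero
      rw [ZMod.natCast_eq_zero_iff] at hzero
      obtain ⟨k, hk⟩ := hzero
      rcases Nat.lt_or_ge k 2 with hk2 | hk2
      · interval_cases k <;> omega
      · omega
  exact run B A θ t i₀ h hbud hinv hrun

lemma core (B : ℤ) (A θ : ℝ) (h0 : 0 ≤ θ) (h1 : θ < 1) : Goal B A θ := by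
  rcases lt_or_ge θ (1/31) with hs | hm
  · exact small B A θ h0 hs
  · rcases le_or_gt θ (30/31) with hm2 | hl
    · exact middle B A θ hm hm2
    · exact large B A θ hl h1

end Stmt11

/-- Along any unit 1177-progression in `ℝⁿ` there is a point whose squared norm,
rounded down, is congruent mod 29 to an element of `{0, 4, 8, 12}`. -/
theorem stmt_11 (n : ℕ) (x₀ v : EuclideanSpace ℝ (Fin n)) (hv : ‖v‖ = 1) :
    ∃ i : ℕ, i ≤ 1176 ∧
      ((⌊‖x₀ + (i : ℝ) • v‖ ^ 2⌋ : ℤ) : ZMod 29) ∈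
        ({0, 4, 8, 12} : Set (ZMod 29)) := by
  set b : ℝ := 2 * (inner ℝ x₀ v : ℝ) with hb
  obtain ⟨i, hi, hmem⟩ := Stmt11.core ⌊b⌋ (‖x₀‖^2) (Int.fract b)
    (Int.fract_nonneg b) (Int.fract_lt_one b)
  refine ⟨i, hi, ?_⟩
  have hq : ‖x₀ + (i:ℝ)•v‖^2 = ‖x₀‖^2 + b*(i:ℝ) + (i:ℝ)^2 := by
    rw [norm_add_sq_real, real_inner_smul_right, norm_smul, hv]
    simp only [Real.norm_eq_abs]
    rw [abs_of_nonneg (by positivity : (0:ℝ) ≤ (i:ℝ))]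
    rw [hb]
    ring
  have hdec : ‖x₀‖^2 + b*(i:ℝ) + (i:ℝ)^2
      = (‖x₀‖^2 + Int.fract b*(i:ℝ)) + (((i:ℤ)^2 + ⌊b⌋*(i:ℤ) : ℤ):ℝ) := by
    push_cast
    linear_combination (-(i:ℝ)) * (Int.floor_add_fract b)
  have hfl : (⌊‖x₀ + (i:ℝ)•v‖^2⌋ : ℤ)
      = (i:ℤ)^2 + ⌊b⌋*(i:ℤ) + ⌊‖x₀‖^2 + Int.fract b*(i:ℝ)⌋ := by
    rw [hq, hdec, Int.floor_add_intCast]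
    ring
  rw [hfl]
  exact hmem
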